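/- For a positive integer N, set a_N = log(N!) − ∫_{1}^{N+1/2} log x dx. Then the sequence (a_N) converges to −1 + (1/2)·log(2π) as N → ∞, and for every N ≥ 1 one has | a_N − (−1 + (1/2)·log(2π)) | ≤ (3/2)·log(3/2) + 1/2 − (1/2)·log(2π). -/

import Mathlib

open Filter

private lemma cubic_le_exp' {x : ℝ} (hx : 0 ≤ x) :
    1 + x + x^2/2 + x^3/6 ≤ Real.exp x := by
  have h := Real.sum_le_exp_of_nonneg hx 4
  simp [Finset.sum_range_succ, Nat.factorial] at h
  nlinarith [h]

private lemma log_cubic_upper (t : ℝ) (h0 : 0 ≤ t) (h1 : t ≤ 1/2) :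
    Real.log (1+t) ≤ t - t^2/2 + t^3/3 := by
  have hs : 0 ≤ t - t^2/2 + t^3/3 := by nlinarith [sq_nonneg t, pow_nonneg h0 3]
  rw [Real.log_le_iff_le_exp (by linarith)]
  have h4 := cubic_le_exp' hs
  nlinarith [pow_nonneg h0 2, pow_nonneg h0 3, pow_nonneg h0 4, pow_nonneg h0 5,
    pow_nonneg h0 6, pow_nonneg h0 7, pow_nonneg h0 8, pow_nonneg h0 9,
    mul_nonneg (mul_nonneg h0 h0) (sub_nonneg.2 h1),
    mul_nonneg (pow_nonneg h0 4) (sub_nonneg.2 h1),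
    mul_nonneg (pow_nonneg h0 6) (sub_nonneg.2 h1),
    mul_nonneg (pow_nonneg h0 8) (sub_nonneg.2 h1)]

private lemma neg_log_cubic_upper (t : ℝ) (h0 : 0 ≤ t) (h1 : t ≤ 1/2) :
    -Real.log (1-t) ≤ t + t^2/2 + 2*t^3/3 := by
  set r := t + t^2/2 + 2*t^3/3 with hr
  have hr0 : 0 ≤ r := by positivity
  have h4 := cubic_le_exp' hr0
  have hS : (0:ℝ) < 1 + r + r^2/2 + r^3/6 := by positivity
  have hexp : Real.exp (-r) ≤ 1 - t := by
    rw [Real.exp_neg]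
    have h5 : (Real.exp r)⁻¹ ≤ (1 + r + r^2/2 + r^3/6)⁻¹ := inv_anti₀ hS h4
    refine h5.trans ?_
    rw [inv_le_iff_one_le_mul₀ hS, hr]
    nlinarith [pow_nonneg h0 2, pow_nonneg h0 3, pow_nonneg h0 4, pow_nonneg h0 5,
      pow_nonneg h0 6, pow_nonneg h0 7, pow_nonneg h0 8, pow_nonneg h0 9, pow_nonneg h0 10,
      mul_nonneg (mul_nonneg h0 h0) (sub_nonneg.2 h1),
      mul_nonneg (pow_nonneg h0 4) (sub_nonneg.2 h1),
      mul_nonneg (pow_nonneg h0 6) (sub_nonneg.2 h1),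
      mul_nonneg (pow_nonneg h0 8) (sub_nonneg.2 h1),
      mul_nonneg (pow_nonneg h0 9) (sub_nonneg.2 h1)]
  have h : -r ≤ Real.log (1-t) := (Real.le_log_iff_exp_le (by linarith)).2 hexp
  linarith

private lemma key_ineq (c : ℝ) (hc : 1 ≤ c) :
    (c+1/2) * Real.log (c+1/2) - (c-1/2) * Real.log (c-1/2) ≤ 1 + Real.log c := by
  have hc0 : (0:ℝ) < c := by linarith
  set t : ℝ := 1/(2*c) with htdef
  have ht0 : 0 < t := by positivity
  have ht1 : t ≤ 1/2 := by
    rw [htdef, div_le_div_iff₀ (by linarith) (by norm_num)]; linarith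
  have h5 : c * t = 1/2 := by rw [htdef]; field_simp
  have h6 : c * t^3 = t^2/2 := by rw [show c*t^3 = (c*t)*t^2 by ring, h5]; ring
  have e1 : c + 1/2 = c*(1+t) := by rw [mul_add, mul_one, h5]
  have e2 : c - 1/2 = c*(1-t) := by rw [mul_sub, mul_one, h5]
  have h1t : (0:ℝ) < 1 + t := by linarith
  have h2t : (0:ℝ) < 1 - t := by linarith
  have hlog1 : Real.log (c+1/2) = Real.log c + Real.log (1+t) := by
    rw [e1, Real.log_mul (ne_of_gt hc0) (ne_of_gt h1t)]
  have hlog2 : Real.log (c-1/2) = Real.log c + Real.log (1-t) := by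
    rw [e2, Real.log_mul (ne_of_gt hc0) (ne_of_gt h2t)]
  rw [hlog1, hlog2]
  have hA := log_cubic_upper t ht0.le ht1
  have hB := neg_log_cubic_upper t ht0.le ht1
  have hca : (0:ℝ) ≤ c + 1/2 := by linarith
  have hcb : (0:ℝ) ≤ c - 1/2 := by linarith
  have k1 : (c+1/2) * Real.log (1+t) ≤ (c+1/2) * (t - t^2/2 + t^3/3) :=
    mul_le_mul_of_nonneg_left hA hca
  have k2 : (c-1/2) * (-Real.log (1-t)) ≤ (c-1/2) * (t + t^2/2 + 2*t^3/3) :=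
    mul_le_mul_of_nonneg_left hB hcb
  have hsum : (c+1/2) * (t - t^2/2 + t^3/3) + (c-1/2) * (t + t^2/2 + 2*t^3/3) = 1 - t^3/6 := by
    linear_combination (2:ℝ)*h5 + h6
  have ht3 : 0 ≤ t^3 := by positivity
  nlinarith [k1, k2, hsum]

theorem stmt_9 (a : ℕ → ℝ)
    (ha : ∀ N : ℕ, a N = Real.log (Nat.factorial N)
      - ∫ x in (1 : ℝ)..((N : ℝ) + 1 / 2), Real.log x) :
    Filter.Tendsto a Filter.atTop (nhds (-1 + (1 / 2) * Real.log (2 * Real.pi))) ∧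
    ∀ N : ℕ, 1 ≤ N →
      |a N - (-1 + (1 / 2) * Real.log (2 * Real.pi))|
        ≤ (3 / 2) * Real.log (3 / 2) + 1 / 2 - (1 / 2) * Real.log (2 * Real.pi) := by
  -- closed form
  have aform : ∀ N : ℕ, a N = Real.log (Nat.factorial N)
      - (((N:ℝ)+1/2) * Real.log ((N:ℝ)+1/2) - ((N:ℝ)+1/2) + 1) := by
    intro N
    have hN : (0:ℝ) ≤ N := Nat.cast_nonneg N
    have hmem : (0:ℝ) ∉ Set.uIcc 1 ((N:ℝ)+1/2) := by
      rw [Set.mem_uIcc]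
      push_neg
      constructor <;> intro h <;> linarith
    rw [ha N, integral_log]
    simp [Real.log_one]
  -- monotone
  have hmono : Monotone a := by
    apply monotone_nat_of_le_succ
    intro n
    have hn : (0:ℝ) ≤ n := Nat.cast_nonneg n
    have hfac : (0:ℝ) < Nat.factorial n := by exact_mod_cast Nat.factorial_pos n
    have hlogfac : Real.log (Nat.factorial (n+1))
        = Real.log ((n:ℝ)+1) + Real.log (Nat.factorial n) := by
      rw [Nat.factorial_succ]
      push_cast
      rw [Real.log_mul (by linarith) (ne_of_gt hfac)]
    have hk := key_ineq ((n:ℝ)+1) (by linarith)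
    rw [aform n, aform (n+1), hlogfac]
    push_cast
    have e1 : ((n:ℝ)+1) + 1/2 = (n:ℝ) + 1 + 1/2 := by ring
    have e2 : ((n:ℝ)+1) - 1/2 = (n:ℝ) + 1/2 := by ring
    rw [e1, e2] at hk
    linarith
  -- the limit
  set L : ℝ := -1 + (1 / 2) * Real.log (2 * Real.pi) with hL
  have hlogpi : Real.log (Real.sqrt Real.pi) = Real.log Real.pi / 2 :=
    Real.log_sqrt Real.pi_pos.le
  have hS : Tendsto (fun n => Real.log (Stirling.stirlingSeq n)) atTop
      (nhds (Real.log Real.pi / 2)) := by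
    rw [← hlogpi]
    exact Stirling.tendsto_stirlingSeq_sqrt_pi.log
      (ne_of_gt (Real.sqrt_pos.2 Real.pi_pos))
  have h1 : Tendsto (fun n : ℕ => (n:ℝ) * Real.log (1 + (1/2)/(n:ℝ))) atTop (nhds (1/2)) :=
    (Real.tendsto_mul_log_one_add_div_atTop (1/2)).comp tendsto_natCast_atTop_atTop
  have h2 : Tendsto (fun n : ℕ => Real.log (1 + (1/2)/(n:ℝ))) atTop (nhds 0) := by
    have hb : Tendsto (fun n : ℕ => 1 + (1/2)/(n:ℝ)) atTop (nhds 1) := by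
      have := Tendsto.div_atTop
        (tendsto_const_nhds : Tendsto (fun _ : ℕ => (1/2:ℝ)) atTop (nhds (1/2:ℝ)))
        tendsto_natCast_atTop_atTop
      simpa using (tendsto_const_nhds (x := (1:ℝ))).add this
    simpa [Real.log_one] using hb.log one_ne_zero
  have htend : Tendsto a atTop (nhds L) := by
    have hcomb : Tendsto (fun n : ℕ => Real.log (Stirling.stirlingSeq n)
        + (1/2) * Real.log 2 - 1/2
        - ((n:ℝ) * Real.log (1 + (1/2)/(n:ℝ)) + (1/2) * Real.log (1 + (1/2)/(n:ℝ))))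
        atTop (nhds (Real.log Real.pi / 2 + (1/2) * Real.log 2 - 1/2 - (1/2 + (1/2) * 0))) := by
      exact ((hS.add_const ((1/2) * Real.log 2)).sub_const (1/2)).sub
        (h1.add (h2.const_mul (1/2)))
    have hval : Real.log Real.pi / 2 + (1/2) * Real.log 2 - 1/2 - (1/2 + (1/2) * 0) = L := by
      rw [hL, Real.log_mul (by norm_num) (ne_of_gt Real.pi_pos)]
      ring
    rw [hval] at hcomb
    refine hcomb.congr' ?_
    filter_upwards [eventually_ge_atTop 1] with n hn
    have hn0 : (0:ℝ) < n := by exact_mod_cast Nat.pos_of_ne_zero (by omega)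
    have hfac : (0:ℝ) < Nat.factorial n := by exact_mod_cast Nat.factorial_pos n
    have hform := Stirling.log_stirlingSeq_formula n
    have hlog2n : Real.log (2 * (n:ℝ)) = Real.log 2 + Real.log n :=
      Real.log_mul (by norm_num) (ne_of_gt hn0)
    have hlogne : Real.log ((n:ℝ) / Real.exp 1) = Real.log n - 1 := by
      rw [Real.log_div (ne_of_gt hn0) (Real.exp_ne_zero 1), Real.log_exp]
    have hlogq : Real.log (1 + (1/2)/(n:ℝ)) = Real.log ((n:ℝ)+1/2) - Real.log n := by
      rw [show (1:ℝ) + (1/2)/(n:ℝ) = ((n:ℝ)+1/2)/(n:ℝ) by field_simp,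
        Real.log_div (by positivity) (ne_of_gt hn0)]
    rw [aform n, hform, hlog2n, hlogne, hlogq]
    ring
  refine ⟨htend, ?_⟩
  -- the bound
  have hle : ∀ n : ℕ, a n ≤ L := fun n => hmono.ge_of_tendsto htend n
  have ha1 : a 1 = 1/2 - (3/2) * Real.log (3/2) := by
    rw [aform 1]
    norm_num [Nat.factorial]
    ring
  have hlog2pi : Real.log (2 * Real.pi) ≤ 2 := by
    rw [Real.log_le_iff_le_exp (by positivity)]
    have h1 : (2.7182818283 : ℝ) < Real.exp 1 := Real.exp_one_gt_d9
    have h2 : Real.pi < 3.15 := by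
      have := Real.pi_lt_d2
      linarith
    have : Real.exp 2 = Real.exp 1 * Real.exp 1 := by
      rw [← Real.exp_add]; norm_num
    nlinarith
  intro N hN
  have h1N : a 1 ≤ a N := hmono hN
  have hNle : a N ≤ L := hle N
  rw [abs_sub_comm, abs_of_nonneg (by linarith)]
  have : L - a 1 ≤ (3 / 2) * Real.log (3 / 2) + 1 / 2 - (1 / 2) * Real.log (2 * Real.pi) := by
    rw [ha1, hL]
    linarith
  linarith
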